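/- Let V be a real vector space of finite dimension 4 and let ε_m, ε_n ∈ V be fixed linearly independent vectors. For a bivector E ∈ ⋀²V, the following are equivalent: (i) E∧E = 0 in ⋀⁴V and E∧ε_m∧ε_n ≠ 0 in ⋀⁴V; (ii) there exist e₁, e₂ ∈ V such that the family (e₁, e₂, ε_m, ε_n) is linearly independent (hence a basis of V) and E = e₁∧e₂. (In the paper's notation: φ(W') = B'.) -/

import Mathlib

open ExteriorAlgebra

private lemma ι_swap {V : Type*} [AddCommGroup V] [Module ℝ V] (x y : V) :
    ι ℝ y * ι ℝ x = - (ι ℝ x * ι ℝ y) :=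
  eq_neg_of_add_eq_zero_right (ι_add_mul_swap x y)

private lemma ι_swap' {V : Type*} [AddCommGroup V] [Module ℝ V] (x y : V)
    (t : ExteriorAlgebra ℝ V) :
    ι ℝ y * (ι ℝ x * t) = -(ι ℝ x * (ι ℝ y * t)) := by
  rw [← mul_assoc, ← mul_assoc, ι_swap, neg_mul]

private lemma ι_sq' {V : Type*} [AddCommGroup V] [Module ℝ V] (x : V)
    (t : ExteriorAlgebra ℝ V) : ι ℝ x * (ι ℝ x * t) = 0 := by
  rw [← mul_assoc, ι_sq_zero, zero_mul]

private lemma top_ne_zero {V : Type*} [AddCommGroup V] [Module ℝ V]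
    [FiniteDimensional ℝ V] (b : Module.Basis (Fin 4) ℝ V) :
    ι ℝ (b 0) * ι ℝ (b 1) * ι ℝ (b 2) * ι ℝ (b 3) ≠ 0 := by
  classical
  have h1 : ι ℝ (b 0) * ι ℝ (b 1) * ι ℝ (b 2) * ι ℝ (b 3)
      = ιMulti ℝ 4 (M := V) ![b 0, b 1, b 2, b 3] := by
    simp [ιMulti_apply, List.ofFn_succ, mul_assoc]
  set f : ∀ i : ℕ, V [⋀^Fin i]→ₗ[ℝ] ℝ := fun i =>
    match i with
    | 4 => b.det
    | _ => 0 with hfdef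
  intro h
  have h2 : liftAlternating f (ιMulti ℝ 4 (M := V) ![b 0, b 1, b 2, b 3]) = 0 := by
    rw [← h1, h, map_zero]
  rw [liftAlternating_apply_ιMulti] at h2
  have h3 : (![b 0, b 1, b 2, b 3] : Fin 4 → V) = ⇑b := by
    funext i; fin_cases i <;> rfl
  have h4 : f 4 ![b 0, b 1, b 2, b 3] = 1 := by
    show b.det ![b 0, b 1, b 2, b 3] = 1
    rw [h3, Module.Basis.det_self]
  rw [h4] at h2
  exact one_ne_zero h2

private lemma pair_decomp {V : Type*} [AddCommGroup V] [Module ℝ V]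
    (b : Module.Basis (Fin 4) ℝ V) {E : ExteriorAlgebra ℝ V}
    (hE : E ∈ ⋀[ℝ]^2 V) :
    ∃ c : Fin 6 → ℝ, E =
      c 0 • (ι ℝ (b 0) * ι ℝ (b 1)) + c 1 • (ι ℝ (b 0) * ι ℝ (b 2)) +
      c 2 • (ι ℝ (b 0) * ι ℝ (b 3)) + c 3 • (ι ℝ (b 1) * ι ℝ (b 2)) +
      c 4 • (ι ℝ (b 1) * ι ℝ (b 3)) + c 5 • (ι ℝ (b 2) * ι ℝ (b 3)) := by
  classical
  set u : Fin 6 → ExteriorAlgebra ℝ V :=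
    ![ι ℝ (b 0) * ι ℝ (b 1), ι ℝ (b 0) * ι ℝ (b 2), ι ℝ (b 0) * ι ℝ (b 3),
      ι ℝ (b 1) * ι ℝ (b 2), ι ℝ (b 1) * ι ℝ (b 3), ι ℝ (b 2) * ι ℝ (b 3)] with hu
  have key : ∀ x y : V, ι ℝ x * ι ℝ y ∈ Submodule.span ℝ (Set.range u) := by
    intro x y
    have hx := b.sum_repr x
    have hy := b.sum_repr y
    rw [← hx, ← hy, map_sum, map_sum, Finset.sum_mul]
    refine Submodule.sum_mem _ fun i _ => ?_
    rw [Finset.mul_sum]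
    refine Submodule.sum_mem _ fun j _ => ?_
    rw [map_smul, map_smul, smul_mul_assoc, mul_smul_comm]
    refine Submodule.smul_mem _ _ (Submodule.smul_mem _ _ ?_)
    fin_cases i <;> fin_cases j <;>
      first
        | (rw [ι_sq_zero]; exact zero_mem _)
        | (exact Submodule.subset_span ⟨0, rfl⟩)
        | (exact Submodule.subset_span ⟨1, rfl⟩)
        | (exact Submodule.subset_span ⟨2, rfl⟩)
        | (exact Submodule.subset_span ⟨3, rfl⟩)
        | (exact Submodule.subset_span ⟨4, rfl⟩)
        | (exact Submodule.subset_span ⟨5, rfl⟩)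
        | (rw [ι_swap]; exact neg_mem (Submodule.subset_span ⟨0, rfl⟩))
        | (rw [ι_swap]; exact neg_mem (Submodule.subset_span ⟨1, rfl⟩))
        | (rw [ι_swap]; exact neg_mem (Submodule.subset_span ⟨2, rfl⟩))
        | (rw [ι_swap]; exact neg_mem (Submodule.subset_span ⟨3, rfl⟩))
        | (rw [ι_swap]; exact neg_mem (Submodule.subset_span ⟨4, rfl⟩))
        | (rw [ι_swap]; exact neg_mem (Submodule.subset_span ⟨5, rfl⟩))
  have hEspan : E ∈ Submodule.span ℝ (Set.range u) := by
    rw [← ιMulti_span_fixedDegree] at hE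
    refine Submodule.span_le.2 ?_ hE
    rintro _ ⟨v, rfl⟩
    have h2 : ιMulti ℝ 2 (M := V) v = ι ℝ (v 0) * ι ℝ (v 1) := by
      simp [ιMulti_apply, List.ofFn_succ, Matrix.vecTail]
    rw [h2]; exact key _ _
  obtain ⟨c, hc⟩ := (Submodule.mem_span_range_iff_exists_fun ℝ).1 hEspan
  rw [Fin.sum_univ_six] at hc
  exact ⟨c, hc.symm⟩

/-- Let `V` be a 4-dimensional real vector space and `ε_m, ε_n ∈ V` linearly
independent. For a bivector `E ∈ ⋀²V` the following are equivalent: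
(i) `E ∧ E = 0` and `E ∧ ε_m ∧ ε_n ≠ 0` (in `⋀⁴V`);
(ii) `E = e₁ ∧ e₂` for some `e₁, e₂` such that `(e₁, e₂, ε_m, ε_n)` is linearly independent
(hence a basis of `V`).  In the paper's notation: `φ(W') = B'`. -/
theorem bivector_decomposable_transversal_iff
    (V : Type*) [AddCommGroup V] [Module ℝ V] [FiniteDimensional ℝ V]
    (hdim : Module.finrank ℝ V = 4)
    (εm εn : V) (hε : LinearIndependent ℝ ![εm, εn])
    (E : ExteriorAlgebra ℝ V) (hE : E ∈ ⋀[ℝ]^2 V) :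
    (E * E = 0 ∧ E * ι ℝ εm * ι ℝ εn ≠ 0) ↔
      ∃ e₁ e₂ : V, LinearIndependent ℝ ![e₁, e₂, εm, εn] ∧ E = ι ℝ e₁ * ι ℝ e₂ := by
  classical
  have card4 : Fintype.card (Fin 4) = Module.finrank ℝ V := by simp [hdim]
  -- find a vector outside the span of any family of fewer than 4 vectors
  have hout : ∀ {n : ℕ}, n < 4 → ∀ v : Fin n → V,
      ∃ x, x ∉ Submodule.span ℝ (Set.range v) := by
    intro n hn v
    have hlt : Submodule.span ℝ (Set.range v) < ⊤ := by
      refine span_lt_top_of_card_lt_finrank ?_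
      rw [hdim]
      refine lt_of_le_of_lt ?_ hn
      rw [Set.toFinset_range]
      exact (Finset.card_image_le).trans (by simp)
    obtain ⟨x, -, hx⟩ := SetLike.exists_of_lt hlt
    exact ⟨x, hx⟩
  constructor
  · rintro ⟨hEE, hne⟩
    -- extend (εm, εn) to a basis (y, x, εm, εn)
    obtain ⟨x, hx⟩ := hout (by norm_num) ![εm, εn]
    have h3 : LinearIndependent ℝ (Fin.cons x ![εm, εn] : Fin 3 → V) :=
      linearIndependent_fin_cons.2 ⟨hε, hx⟩
    obtain ⟨y, hy⟩ := hout (by norm_num) (Fin.cons x ![εm, εn] : Fin 3 → V)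
    have h4 : LinearIndependent ℝ (Fin.cons y (Fin.cons x ![εm, εn]) : Fin 4 → V) :=
      linearIndependent_fin_cons.2 ⟨h3, hy⟩
    set b : Module.Basis (Fin 4) ℝ V := basisOfLinearIndependentOfCardEqFinrank h4 card4 with hbdef
    have hb : ⇑b = (Fin.cons y (Fin.cons x ![εm, εn]) : Fin 4 → V) :=
      coe_basisOfLinearIndependentOfCardEqFinrank h4 card4
    have hb2 : b 2 = εm := by rw [hb]; rfl
    have hb3 : b 3 = εn := by rw [hb]; rfl
    obtain ⟨c, hc⟩ := pair_decomp b hE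
    have hΩ : ι ℝ (b 0) * ι ℝ (b 1) * ι ℝ (b 2) * ι ℝ (b 3) ≠ 0 := top_ne_zero b
    -- extract the coefficient conditions
    have hEmn : E * ι ℝ (b 2) * ι ℝ (b 3)
        = c 0 • (ι ℝ (b 0) * ι ℝ (b 1) * ι ℝ (b 2) * ι ℝ (b 3)) := by
      rw [hc]
      simp only [add_mul, smul_mul_assoc, mul_assoc,
        ι_swap' (b 0) (b 1), ι_swap' (b 0) (b 2), ι_swap' (b 0) (b 3),
        ι_swap' (b 1) (b 2), ι_swap' (b 1) (b 3), ι_swap' (b 2) (b 3),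
        ι_sq' (b 0), ι_sq' (b 1), ι_sq' (b 2), ι_sq' (b 3),
        ι_sq_zero, ι_swap (b 0) (b 1), ι_swap (b 0) (b 2), ι_swap (b 0) (b 3),
        ι_swap (b 1) (b 2), ι_swap (b 1) (b 3), ι_swap (b 2) (b 3),
        mul_neg, neg_mul, neg_neg, mul_zero, smul_zero, smul_neg, add_zero, zero_add, neg_zero]
    have hc0 : c 0 ≠ 0 := by
      intro h0
      apply hne
      rw [hb2, hb3] at hEmn
      rw [hEmn, h0, zero_smul]
    have hEE2 : E * E = (2 * (c 0 * c 5 - c 1 * c 4 + c 2 * c 3)) •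
        (ι ℝ (b 0) * ι ℝ (b 1) * ι ℝ (b 2) * ι ℝ (b 3)) := by
      rw [hc]
      simp only [add_mul, mul_add, smul_mul_assoc, mul_smul_comm, mul_assoc,
        ι_swap' (b 0) (b 1), ι_swap' (b 0) (b 2), ι_swap' (b 0) (b 3),
        ι_swap' (b 1) (b 2), ι_swap' (b 1) (b 3), ι_swap' (b 2) (b 3),
        ι_sq' (b 0), ι_sq' (b 1), ι_sq' (b 2), ι_sq' (b 3),
        ι_sq_zero, ι_swap (b 0) (b 1), ι_swap (b 0) (b 2), ι_swap (b 0) (b 3),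
        ι_swap (b 1) (b 2), ι_swap (b 1) (b 3), ι_swap (b 2) (b 3),
        mul_neg, neg_mul, neg_neg, mul_zero, zero_mul, smul_zero, smul_neg,
        add_zero, zero_add, neg_zero]
      module
    have hPf : c 0 * c 5 - c 1 * c 4 + c 2 * c 3 = 0 := by
      rw [hEE] at hEE2
      rcases smul_eq_zero.1 hEE2.symm with h | h
      · linarith
      · exact absurd h hΩ
    -- construct the decomposition
    refine ⟨c 0 • b 0 - c 3 • b 2 - c 4 • b 3,
            b 1 + (c 1 / c 0) • b 2 + (c 2 / c 0) • b 3, ?_, ?_⟩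
    · rw [← hb2, ← hb3]
      refine Fintype.linearIndependent_iff.2 fun g hg => ?_
      rw [Fin.sum_univ_four] at hg
      simp only [Matrix.cons_val_zero, Matrix.cons_val_one, Matrix.head_cons,
        Matrix.cons_val_two, Matrix.tail_cons, Matrix.cons_val_three] at hg
      have h0 := Fintype.linearIndependent_iff.1 b.linearIndependent
        ![g 0 * c 0, g 1, -(g 0 * c 3) + g 1 * (c 1 / c 0) + g 2,
          -(g 0 * c 4) + g 1 * (c 2 / c 0) + g 3] ?_
      · have e0 := h0 0
        have e1 := h0 1
        have e2 := h0 2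
        have e3 := h0 3
        simp only [Matrix.cons_val_zero, Matrix.cons_val_one, Matrix.head_cons,
          Matrix.cons_val_two, Matrix.tail_cons, Matrix.cons_val_three] at e0 e1 e2 e3
        have hg0 : g 0 = 0 := by
          rcases mul_eq_zero.1 e0 with h | h
          · exact h
          · exact absurd h hc0
        have hg1 : g 1 = 0 := e1
        intro i
        fin_cases i
        · exact hg0
        · exact hg1
        · rw [hg0, hg1] at e2; simpa using e2
        · rw [hg0, hg1] at e3; simpa using e3
      · rw [Fin.sum_univ_four]
        simp only [Matrix.cons_val_zero, Matrix.cons_val_one, Matrix.head_cons,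
          Matrix.cons_val_two, Matrix.tail_cons, Matrix.cons_val_three]
        linear_combination (norm := module) hg
    · rw [hc]
      symm
      simp only [map_add, map_sub, map_smul, add_mul, mul_add, sub_mul, mul_sub,
        smul_mul_assoc, mul_smul_comm, ι_sq_zero,
        ι_swap (b 0) (b 1), ι_swap (b 0) (b 2), ι_swap (b 0) (b 3),
        ι_swap (b 1) (b 2), ι_swap (b 1) (b 3), ι_swap (b 2) (b 3),
        mul_neg, neg_mul, neg_neg, smul_zero, smul_neg, add_zero, zero_add, neg_zero]
      match_scalars <;> field_simp
      linear_combination -hPf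
  · rintro ⟨e₁, e₂, hli, rfl⟩
    constructor
    · simp only [mul_assoc, ι_swap' e₁ e₂, ι_sq' e₁, ι_sq' e₂, ι_sq_zero,
        mul_neg, mul_zero, neg_zero]
    · set b : Module.Basis (Fin 4) ℝ V := basisOfLinearIndependentOfCardEqFinrank hli card4 with hbdef
      have hb : ⇑b = ![e₁, e₂, εm, εn] :=
        coe_basisOfLinearIndependentOfCardEqFinrank hli card4
      have h0 : b 0 = e₁ := by rw [hb]; rfl
      have h1 : b 1 = e₂ := by rw [hb]; rfl
      have h2 : b 2 = εm := by rw [hb]; rfl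
      have h3 : b 3 = εn := by rw [hb]; rfl
      have := top_ne_zero b
      rwa [h0, h1, h2, h3] at this
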